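/- Let G be a strongly regular graph with parameters v = 4n², k = 2n² - n, λ = μ = n² - n whose vertex set is partitioned into 2n disjoint cocliques of size 2n. Then H = J - 2A (where A is the adjacency matrix and J the all-ones matrix), with rows and columns ordered so the cocliques form consecutive blocks, is a symmetric Bush-type Hadamard matrix of order 4n². -/

import Mathlib

open Matrix Finset

lemma bush_cast_k (n : ℕ) : ((2 * n ^ 2 - n : ℕ) : ℚ) = 2 * (n : ℚ) ^ 2 - n := by
  have h : n ≤ 2 * n ^ 2 := by nlinarith
  rw [Nat.cast_sub h]; push_cast; ring

lemma bush_cast_mu (n : ℕ) : ((n ^ 2 - n : ℕ) : ℚ) = (n : ℚ) ^ 2 - n := by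
  have h : n ≤ n ^ 2 := Nat.le_self_pow two_ne_zero n
  rw [Nat.cast_sub h]; push_cast; ring

lemma bush_key {n : ℕ} {G : SimpleGraph (Fin (2 * n) × Fin (2 * n))} [DecidableRel G.Adj]
    (hsrg : G.IsSRGWith (4 * n ^ 2) (2 * n ^ 2 - n) (n ^ 2 - n) (n ^ 2 - n))
    (hcoclique : ∀ i a b, ¬ G.Adj (i, a) (i, b)) (j : Fin (2 * n))
    (x : Fin (2 * n) × Fin (2 * n)) (hx : x.1 ≠ j) :
    ∑ b, G.adjMatrix ℚ x (j, b) = n := by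
  set A := G.adjMatrix ℚ with hA
  set d : (Fin (2 * n) × Fin (2 * n)) → ℚ := fun y => ∑ b, A y (j, b) with hd
  -- d vanishes on the block j
  have h0 : ∀ a, d (j, a) = 0 := by
    intro a
    apply Finset.sum_eq_zero
    intro b _
    simp [hA, hcoclique j a b]
  -- column sums of A are the degree
  have hdeg : ∀ y : Fin (2 * n) × Fin (2 * n), (∑ x, A x y) = ((2 * n ^ 2 - n : ℕ) : ℚ) := by
    intro y
    have h1 : (∑ x, A x y) = (G.degree y : ℚ) := by
      simp only [hA, SimpleGraph.adjMatrix_apply]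
      simp_rw [G.adj_comm]
      rw [Finset.sum_boole]
      congr 1
      rw [SimpleGraph.degree, SimpleGraph.neighborFinset_eq_filter]
    rw [h1, hsrg.regular y]
  have hsum : ∑ x, d x = (2 * n : ℚ) * ((2 * n ^ 2 - n : ℕ) : ℚ) := by
    rw [hd]
    rw [Finset.sum_comm]
    simp [hdeg, Finset.sum_const, Finset.card_univ, mul_comm]
  -- entries of A * A
  have hm := hsrg.matrix_eq (α := ℚ)
  rw [pow_two] at hm
  have hA2 : ∀ b c : Fin (2 * n), (A * A) (j, b) (j, c)
      = if b = c then ((2 * n ^ 2 - n : ℕ) : ℚ) else ((n ^ 2 - n : ℕ) : ℚ) := by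
    intro b c
    rw [hm]
    simp only [Matrix.add_apply, Matrix.smul_apply]
    simp only [Matrix.one_apply, SimpleGraph.adjMatrix_apply, SimpleGraph.compl_adj,
      nsmul_eq_mul]
    by_cases hbc : b = c
    · subst hbc
      simp [hcoclique j b b]
    · have hne : ((j, b) : Fin (2 * n) × Fin (2 * n)) ≠ (j, c) := by
        simp [Prod.ext_iff, hbc]
      simp [hne, hcoclique j b c, hbc]
  have hsq : ∑ x, (d x) ^ 2
      = (2 * n : ℚ) * ((2 * n ^ 2 - n : ℕ) : ℚ)
        + (2 * n : ℚ) * ((2 * n : ℚ) - 1) * ((n ^ 2 - n : ℕ) : ℚ) := by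
    have h1 : ∀ x, (d x) ^ 2 = ∑ b, ∑ c, A x (j, b) * A x (j, c) := by
      intro x
      rw [hd, pow_two, Finset.sum_mul_sum]
    have h2 : ∑ x, (d x) ^ 2 = ∑ b, ∑ c, (A * A) (j, b) (j, c) := by
      simp_rw [h1]
      rw [Finset.sum_comm]
      refine Finset.sum_congr rfl fun b _ => ?_
      rw [Finset.sum_comm]
      refine Finset.sum_congr rfl fun c _ => ?_
      rw [Matrix.mul_apply]
      refine Finset.sum_congr rfl fun x _ => ?_
      congr 1
      simp [hA, G.adj_comm]
    rw [h2]
    have h3 : ∀ b : Fin (2 * n), ∑ c, (A * A) (j, b) (j, c)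
        = ((2 * n ^ 2 - n : ℕ) : ℚ) + ((2 * n : ℚ) - 1) * ((n ^ 2 - n : ℕ) : ℚ) := by
      intro b
      simp_rw [hA2]
      have hsplit : ∀ c : Fin (2 * n),
          (if b = c then ((2 * n ^ 2 - n : ℕ) : ℚ) else ((n ^ 2 - n : ℕ) : ℚ))
          = (if b = c then ((2 * n ^ 2 - n : ℕ) : ℚ) - ((n ^ 2 - n : ℕ) : ℚ) else 0)
            + ((n ^ 2 - n : ℕ) : ℚ) := by
        intro c; split <;> ring
      simp_rw [hsplit]
      rw [Finset.sum_add_distrib, Finset.sum_ite_eq, Finset.sum_const, Finset.card_univ]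
      simp
      ring
    simp_rw [h3]
    rw [Finset.sum_const, Finset.card_univ]
    simp
    ring
  -- total variance computation
  have hcard : (Fintype.card (Fin (2 * n) × Fin (2 * n)) : ℚ) = 4 * (n : ℚ) ^ 2 := by
    rw [hsrg.card]; push_cast; ring
  have hS : ∑ x, (d x - (n : ℚ)) ^ 2 = 2 * (n : ℚ) ^ 3 := by
    have hexp : ∀ x, (d x - (n : ℚ)) ^ 2 = (d x) ^ 2 - 2 * n * d x + (n : ℚ) ^ 2 := by
      intro x; ring
    simp_rw [hexp]
    rw [Finset.sum_add_distrib, Finset.sum_sub_distrib, ← Finset.mul_sum, hsq, hsum,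
      Finset.sum_const, Finset.card_univ, nsmul_eq_mul, hcard, bush_cast_k n, bush_cast_mu n]
    ring
  have hdiag : ∑ a, (d (j, a) - (n : ℚ)) ^ 2 = 2 * (n : ℚ) ^ 3 := by
    simp_rw [h0]
    rw [Finset.sum_const, Finset.card_univ, Fintype.card_fin, nsmul_eq_mul]
    push_cast
    ring
  have hsplit2 : ∑ x, (d x - (n : ℚ)) ^ 2
      = (∑ a, (d (j, a) - (n : ℚ)) ^ 2)
        + ∑ i ∈ Finset.univ.erase j, ∑ a, (d (i, a) - (n : ℚ)) ^ 2 := by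
    rw [Fintype.sum_prod_type, ← Finset.add_sum_erase _ _ (Finset.mem_univ j)]
  have hT : ∑ i ∈ Finset.univ.erase j, ∑ a, (d (i, a) - (n : ℚ)) ^ 2 = 0 := by
    rw [hsplit2, hdiag] at hS
    linarith
  rw [Finset.sum_eq_zero_iff_of_nonneg
    (fun i _ => Finset.sum_nonneg fun a _ => sq_nonneg _)] at hT
  have hx1 : x.1 ∈ Finset.univ.erase j := Finset.mem_erase.2 ⟨hx, Finset.mem_univ _⟩
  have hT2 := hT x.1 hx1
  rw [Finset.sum_eq_zero_iff_of_nonneg (fun a _ => sq_nonneg _)] at hT2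
  have := hT2 x.2 (Finset.mem_univ _)
  have h4 : d (x.1, x.2) = n := by
    have h5 := pow_eq_zero_iff (n := 2) (by norm_num) |>.1 this
    linarith [h5]
  simpa using h4

theorem srg_with_coclique_partition_gives_bush (n : ℕ)
    (G : SimpleGraph (Fin (2 * n) × Fin (2 * n))) [DecidableRel G.Adj]
    (hsrg : G.IsSRGWith (4 * n ^ 2) (2 * n ^ 2 - n) (n ^ 2 - n) (n ^ 2 - n))
    (hcoclique : ∀ i a b, ¬ G.Adj (i, a) (i, b)) :
    let J : Matrix (Fin (2 * n) × Fin (2 * n)) (Fin (2 * n) × Fin (2 * n)) ℚ := fun _ _ => 1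
    let H := J - (2 : ℚ) • G.adjMatrix ℚ
    (∀ x y, H x y = 1 ∨ H x y = -1) ∧
    H.transpose = H ∧
    H * H.transpose =
      ((4 * n ^ 2 : ℕ) : ℚ) • (1 : Matrix (Fin (2 * n) × Fin (2 * n)) (Fin (2 * n) × Fin (2 * n)) ℚ) ∧
    (∀ i a b, H (i, a) (i, b) = 1) ∧
    (∀ i j, i ≠ j → ∀ a, ∑ b, H (i, a) (j, b) = 0) ∧
    (∀ i j, i ≠ j → ∀ b, ∑ a, H (i, a) (j, b) = 0) := by
  intro J H
  have hHapp : ∀ x y, H x y = 1 - 2 * (if G.Adj x y then (1 : ℚ) else 0) := by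
    intro x y
    simp only [H, Matrix.sub_apply, Matrix.smul_apply, smul_eq_mul]
    simp [J, SimpleGraph.adjMatrix_apply]
  have hsym : H.transpose = H := by
    ext x y
    rw [Matrix.transpose_apply, hHapp, hHapp]
    simp only [G.adj_comm x y]
  refine ⟨?_, hsym, ?_, ?_, ?_, ?_⟩
  · intro x y
    rw [hHapp]
    by_cases h : G.Adj x y <;> simp [h] <;> norm_num
  · -- H * Hᵀ = v • 1
    rw [hsym]
    have hC : G.adjMatrix ℚ * G.adjMatrix ℚ
        = ((2 * n ^ 2 - n : ℕ) : ℚ) • 1 + ((n ^ 2 - n : ℕ) : ℚ) • G.adjMatrix ℚ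
          + ((n ^ 2 - n : ℕ) : ℚ) • Gᶜ.adjMatrix ℚ := by
      have hm := hsrg.matrix_eq (α := ℚ)
      rw [pow_two] at hm
      rw [hm]
      simp [← Nat.cast_smul_eq_nsmul ℚ]
    have hcompl : Gᶜ.adjMatrix ℚ = J - 1 - G.adjMatrix ℚ := by
      ext x y
      by_cases h1 : x = y
      · subst h1; rw [Matrix.sub_apply, Matrix.sub_apply]; simp [J, Matrix.one_apply]
      · by_cases h2 : G.Adj x y <;>
          (rw [Matrix.sub_apply, Matrix.sub_apply]; simp [J, SimpleGraph.compl_adj, h1, h2, Matrix.one_apply])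
    have hJJ : J * J = ((4 * n ^ 2 : ℕ) : ℚ) • J := by
      ext x y
      rw [Matrix.mul_apply, Matrix.smul_apply]
      simp [J, Finset.card_univ, hsrg.card]
    have hAJ : G.adjMatrix ℚ * J = ((2 * n ^ 2 - n : ℕ) : ℚ) • J := by
      ext x y
      rw [Matrix.mul_apply, Matrix.smul_apply]
      simp [J, hsrg.regular x]
      rw [← hsrg.regular x, ← G.card_neighborFinset_eq_degree, G.neighborFinset_eq_filter]
    have hJA : J * G.adjMatrix ℚ = ((2 * n ^ 2 - n : ℕ) : ℚ) • J := by
      ext x y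
      rw [Matrix.mul_apply, Matrix.smul_apply]
      simp [J, hsrg.regular y]
      rw [← hsrg.regular y, ← G.card_neighborFinset_eq_degree, G.neighborFinset_eq_filter]
      congr 1
      ext z
      simp [G.adj_comm]
    have expand : H * H
        = J * J - (2:ℚ) • (J * G.adjMatrix ℚ) - (2:ℚ) • (G.adjMatrix ℚ * J)
          + (4:ℚ) • (G.adjMatrix ℚ * G.adjMatrix ℚ) := by
      simp only [H, sub_mul, mul_sub, Matrix.smul_mul, Matrix.mul_smul, smul_smul]
      norm_num
      abel
    rw [expand, hC, hcompl, hJJ, hAJ, hJA, bush_cast_k n, bush_cast_mu n]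
    have hv : ((4 * n ^ 2 : ℕ) : ℚ) = 4 * (n : ℚ) ^ 2 := by push_cast; ring
    rw [hv]
    module
  · intro i a b
    rw [hHapp]
    simp [hcoclique i a b]
  · intro i j hij a
    have hk := bush_key hsrg hcoclique j (i, a) hij
    simp_rw [hHapp]
    rw [Finset.sum_sub_distrib]
    simp only [SimpleGraph.adjMatrix_apply] at hk
    rw [← Finset.mul_sum, hk, Finset.sum_const, Finset.card_univ, Fintype.card_fin]
    push_cast
    ring
  · intro i j hij b
    have hk := bush_key hsrg hcoclique i (j, b) (Ne.symm hij)
    have hswap : ∀ a, H (i, a) (j, b) = H (j, b) (i, a) := by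
      intro a; rw [hHapp, hHapp]; simp only [G.adj_comm (i, a) (j, b)]
    simp_rw [hswap, hHapp]
    rw [Finset.sum_sub_distrib]
    simp only [SimpleGraph.adjMatrix_apply] at hk
    rw [← Finset.mul_sum, hk, Finset.sum_const, Finset.card_univ, Fintype.card_fin]
    push_cast
    ring
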